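/- Let α = 3.5. Then L(t) = 1 − (1 + t/α)^(−α) ≤ t for every t ≥ 0. Consequently, for any λ > 0, λ_MT > 0, P_tx ≥ 0, P_circ ≥ 0 and P_idle ≥ 0, the network power consumption of Load Model 2, P_grid² = λ·P_tx·L(λ_MT/λ) + λ_MT·P_circ + λ·P_idle·(1 − L(λ_MT/λ)), is greater than or equal to that of Load Model 1, P_grid¹ = λ·(P_tx + P_circ)·L(λ_MT/λ) + λ·P_idle·(1 − L(λ_MT/λ)). -/
import Mathlib


open Real Filter Set Topology

lemma L_le_t (t : ℝ) (ht : 0 ≤ t) :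
    1 - (1 + t / (3.5 : ℝ)) ^ (-(3.5 : ℝ)) ≤ t := by
  rw [show (3.5 : ℝ) = 7/2 by norm_num]
  have hb : (0:ℝ) < 1 + t / (7/2) := by positivity
  set y : ℝ := (1 + t / (7/2))⁻¹ with hy
  have hy0 : 0 < y := by positivity
  have h1 : (1 + t / (7/2:ℝ)) ^ (-(7/2:ℝ)) = y ^ (7/2:ℝ) := by
    rw [hy, Real.inv_rpow hb.le, Real.rpow_neg hb.le]
  have hbern : 1 + 7/2 * (y - 1) ≤ (1 + (y - 1)) ^ (7/2:ℝ) :=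
    one_add_mul_self_le_rpow_one_add (by linarith) (by norm_num)
  have h2 : (1 + (y - 1)) = y := by ring
  rw [h2] at hbern
  have h3 : 7/2 * (1 - y) ≤ t := by
    have hyv : y * (1 + t / (7/2)) = 1 := inv_mul_cancel₀ (ne_of_gt hb)
    have hy1 : y ≤ 1 := by
      rw [hy]; exact inv_le_one_of_one_le₀ (by linarith)
    nlinarith [mul_nonneg ht (sub_nonneg.2 hy1)]
  rw [h1]
  linarith

/-- Remark 11 of the paper: `L(t) = 1 − (1 + t/α)^(−α) ≤ t` for `t ≥ 0`
(`α = 7/2`); consequently the network power consumption of Load Model 2 is at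
least that of Load Model 1 for the same transmit power, circuit power, idle
power, and densities of base stations and mobile terminals. -/
theorem load_model_power_consumption_comparison (α : ℝ) (hα : α = 3.5)
    (L : ℝ → ℝ) (hL : ∀ t : ℝ, L t = 1 - (1 + t / α) ^ (-α)) :
    (∀ t : ℝ, 0 ≤ t → L t ≤ t) ∧
    (∀ lam lMT Ptx Pcirc Pidle : ℝ,
      0 < lam → 0 < lMT → 0 ≤ Ptx → 0 ≤ Pcirc → 0 ≤ Pidle →
      lam * (Ptx + Pcirc) * L (lMT / lam) + lam * Pidle * (1 - L (lMT / lam)) ≤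
        lam * Ptx * L (lMT / lam) + lMT * Pcirc +
          lam * Pidle * (1 - L (lMT / lam))) := by
  subst hα
  have hLt : ∀ t : ℝ, 0 ≤ t → L t ≤ t := by
    intro t ht
    rw [hL t]
    exact L_le_t t ht
  refine ⟨hLt, ?_⟩
  intro lam lMT Ptx Pcirc Pidle hlam hlMT hPtx hPcirc hPidle
  have ht : (0:ℝ) ≤ lMT / lam := by positivity
  have h := hLt (lMT / lam) ht
  have h2 : lam * L (lMT / lam) ≤ lMT := by
    have := mul_le_mul_of_nonneg_left h hlam.le
    rwa [mul_div_cancel₀ _ (ne_of_gt hlam)] at this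
  nlinarith [mul_le_mul_of_nonneg_left h2 hPcirc]
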